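/- Let f : [a,b] → ℝ be continuous and integrable on [a,b] with 0 ≤ a < b, let l ≥ 1, and suppose |f|^l is convex on [a,b]. Then for any fixed p, q > 0, ∫_a^b (x-a)^p (b-x)^q f(x) dx ≤ (b-a)^{p+q+1} [β(p+1, q+1)]^{(l-1)/l} [β(q+2, p+1)|f(a)|^l + β(q+1, p+2)|f(b)|^l]^{1/l}. -/

import Mathlib

open Real Set MeasureTheory intervalIntegral

noncomputable def beta (x y : ℝ) : ℝ := ∫ t in (0:ℝ)..1, t ^ (x-1) * (1-t) ^ (y-1)

lemma beta_symm (x y : ℝ) : beta x y = beta y x := by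
  unfold beta
  have h := intervalIntegral.integral_comp_sub_left
    (a := (0:ℝ)) (b := 1) (fun s => s ^ (y-1) * (1-s) ^ (x-1)) 1
  simp only [sub_zero, sub_self] at h
  rw [← h]
  apply intervalIntegral.integral_congr
  intro t ht
  simp only [sub_sub_cancel]
  ring

lemma beta_nonneg (x y : ℝ) : 0 ≤ beta x y := by
  unfold beta
  apply intervalIntegral.integral_nonneg zero_le_one
  intro t ht
  exact mul_nonneg (Real.rpow_nonneg ht.1 _) (Real.rpow_nonneg (by linarith [ht.2]) _)

lemma cont_rpow {r : ℝ} (hr : 0 < r) : Continuous fun y : ℝ => y ^ r :=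
  continuous_iff_continuousAt.2 fun x => Real.continuousAt_rpow_const x r (Or.inr hr.le)

lemma weight_int {a b : ℝ} (hab : a < b) {r s : ℝ} (hr : 0 < r) (hs : 0 < s) :
    ∫ x in a..b, (x-a)^r * (b-x)^s = (b-a)^(r+s+1) * beta (r+1) (s+1) := by
  have hba : (0:ℝ) < b - a := by linarith
  have h := intervalIntegral.integral_comp_mul_add
    (a := (0:ℝ)) (b := 1) (fun x => (x-a)^r * (b-x)^s) (sub_ne_zero.2 hab.ne') a
  simp only [mul_zero, zero_add, mul_one, sub_add_cancel, smul_eq_mul] at h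
  have h2 : ∫ t in (0:ℝ)..1, (fun x => (x-a)^r * (b-x)^s) ((b-a) * t + a)
      = (b-a)^(r+s) * beta (r+1) (s+1) := by
    unfold beta
    rw [← intervalIntegral.integral_const_mul]
    apply intervalIntegral.integral_congr
    intro t ht
    rw [Set.uIcc_of_le zero_le_one] at ht
    have ht0 : 0 ≤ t := ht.1
    have ht1 : t ≤ 1 := ht.2
    simp only
    have e1 : (b-a) * t + a - a = (b-a) * t := by ring
    have e2 : b - ((b-a) * t + a) = (b-a) * (1-t) := by ring
    rw [e1, e2, Real.mul_rpow hba.le ht0, Real.mul_rpow hba.le (by linarith),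
      Real.rpow_add hba]
    simp only [add_sub_cancel_right]
    ring
  rw [h2] at h
  have := congrArg (fun z => (b-a) * z) h
  simp only [← mul_assoc, mul_inv_cancel₀ (sub_ne_zero.2 hab.ne'), one_mul] at this
  rw [← this, Real.rpow_add_one hba.ne', mul_comm ((b-a)^(r+s)) (b-a)]

theorem stmt12 (a b p q : ℝ) (f : ℝ → ℝ)
    (ha : 0 ≤ a) (hab : a < b) (hp : 0 < p) (hq : 0 < q)
    (hcont : ContinuousOn f (Set.Icc a b))
    (hint : IntervalIntegrable f volume a b)
    (l : ℝ) (hl : 1 ≤ l)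
    (hf : ConvexOn ℝ (Set.Icc a b) (fun x => |f x| ^ l)) :
    ∫ x in a..b, (x-a)^p * (b-x)^q * f x
      ≤ (b-a)^(p+q+1) * (beta (p+1) (q+1))^((l-1)/l)
          * (beta (q+2) (p+1) * |f a| ^ l + beta (q+1) (p+2) * |f b| ^ l) ^ (1/l) := by
  have hba : (0:ℝ) < b - a := by linarith
  have hl0 : (0:ℝ) < l := by linarith
  set w : ℝ → ℝ := fun x => (x-a)^p * (b-x)^q with hw
  set g : ℝ → ℝ := fun x => |f x| ^ l with hg
  set A : ℝ := |f a| ^ l with hA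
  set B : ℝ := |f b| ^ l with hB
  set X : ℝ := (b-a)^(p+q+1) with hX
  have hX0 : 0 < X := Real.rpow_pos_of_pos hba _
  have hA0 : 0 ≤ A := Real.rpow_nonneg (abs_nonneg _) _
  have hB0 : 0 ≤ B := Real.rpow_nonneg (abs_nonneg _) _
  set C : ℝ := beta (q+2) (p+1) * A + beta (q+1) (p+2) * B with hC
  have hC0 : 0 ≤ C := add_nonneg (mul_nonneg (beta_nonneg _ _) hA0)
    (mul_nonneg (beta_nonneg _ _) hB0)
  -- continuity facts
  have hwcont : Continuous w :=
    (((continuous_id.sub continuous_const).rpow_const fun _ => Or.inr hp.le).mul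
      ((continuous_const.sub continuous_id).rpow_const fun _ => Or.inr hq.le))
  have hgcont : ContinuousOn g (Set.Icc a b) :=
    (hcont.abs).rpow_const fun x _ => Or.inr hl0.le
  have hwnn : ∀ x ∈ Set.Icc a b, 0 ≤ w x := fun x hx =>
    mul_nonneg (Real.rpow_nonneg (by linarith [hx.1]) _)
      (Real.rpow_nonneg (by linarith [hx.2]) _)
  -- pointwise convexity bound
  have hgb : ∀ x ∈ Set.Icc a b, g x ≤ (b-x)/(b-a) * A + (x-a)/(b-a) * B := by
    intro x hx
    have hu : (0:ℝ) ≤ (b-x)/(b-a) := div_nonneg (by linarith [hx.2]) hba.le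
    have hv : (0:ℝ) ≤ (x-a)/(b-a) := div_nonneg (by linarith [hx.1]) hba.le
    have huv : (b-x)/(b-a) + (x-a)/(b-a) = 1 := by field_simp; ring
    have hxc : ((b-x)/(b-a)) • a + ((x-a)/(b-a)) • b = x := by
      simp only [smul_eq_mul]
      rw [div_mul_eq_mul_div, div_mul_eq_mul_div, ← add_div, div_eq_iff hba.ne']
      ring
    have := hf.2 (Set.left_mem_Icc.2 hab.le) (Set.right_mem_Icc.2 hab.le) hu hv huv
    rw [hxc] at this
    simpa [smul_eq_mul] using this
  -- integrability
  have hiwg : IntervalIntegrable (fun x => w x * g x) volume a b := by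
    apply ContinuousOn.intervalIntegrable
    rw [Set.uIcc_of_le hab.le]
    exact hwcont.continuousOn.mul hgcont
  have hiwf : IntervalIntegrable (fun x => w x * f x) volume a b := by
    apply ContinuousOn.intervalIntegrable
    rw [Set.uIcc_of_le hab.le]
    exact hwcont.continuousOn.mul hcont
  have hiwa : IntervalIntegrable (fun x => w x * |f x|) volume a b := by
    apply ContinuousOn.intervalIntegrable
    rw [Set.uIcc_of_le hab.le]
    exact hwcont.continuousOn.mul hcont.abs
  -- key lemma K
  have hK : ∫ x in a..b, w x * g x ≤ X * C := by
    have hi2 : IntervalIntegrable (fun x => w x * ((b-x)/(b-a) * A + (x-a)/(b-a) * B))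
        volume a b := by
      apply Continuous.intervalIntegrable
      exact hwcont.mul (((continuous_const.sub continuous_id).div_const _ |>.mul
        continuous_const).add ((continuous_id.sub continuous_const).div_const _ |>.mul
        continuous_const))
    have hmono : ∫ x in a..b, w x * g x
        ≤ ∫ x in a..b, w x * ((b-x)/(b-a) * A + (x-a)/(b-a) * B) :=
      intervalIntegral.integral_mono_on hab.le hiwg hi2
        (fun x hx => mul_le_mul_of_nonneg_left (hgb x hx) (hwnn x hx))
    have hcomp : ∫ x in a..b, w x * ((b-x)/(b-a) * A + (x-a)/(b-a) * B)
        = X * C := by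
      have heq : ∀ x ∈ Set.uIcc a b,
          w x * ((b-x)/(b-a) * A + (x-a)/(b-a) * B)
          = (A/(b-a)) * ((x-a)^p * (b-x)^(q+1)) + (B/(b-a)) * ((x-a)^(p+1) * (b-x)^q) := by
        intro x hx
        rw [Set.uIcc_of_le hab.le] at hx
        have e1 : (b-x)^(q+1) = (b-x)^q * (b-x) := by
          rw [Real.rpow_add' (by linarith [hx.2]) (by positivity), Real.rpow_one]
        have e2 : (x-a)^(p+1) = (x-a)^p * (x-a) := by
          rw [Real.rpow_add' (by linarith [hx.1]) (by positivity), Real.rpow_one]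
        rw [e1, e2, hw]
        field_simp
      rw [intervalIntegral.integral_congr heq]
      have i1 : IntervalIntegrable (fun x => (x-a)^p * (b-x)^(q+1)) volume a b := by
        apply Continuous.intervalIntegrable
        exact ((continuous_id.sub continuous_const).rpow_const fun _ => Or.inr hp.le).mul
          ((continuous_const.sub continuous_id).rpow_const fun _ => Or.inr (by linarith))
      have i2 : IntervalIntegrable (fun x => (x-a)^(p+1) * (b-x)^q) volume a b := by
        apply Continuous.intervalIntegrable
        exact ((continuous_id.sub continuous_const).rpow_const fun _ => Or.inr (by linarith)).mul
          ((continuous_const.sub continuous_id).rpow_const fun _ => Or.inr hq.le)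
      rw [intervalIntegral.integral_add ((i1.const_mul _)) ((i2.const_mul _)),
        intervalIntegral.integral_const_mul, intervalIntegral.integral_const_mul,
        weight_int hab hp (by linarith), weight_int hab (by linarith) hq]
      have ex1 : (b-a)^(p+(q+1)+1) = X * (b-a) := by
        rw [hX, ← Real.rpow_add_one hba.ne']
        ring_nf
      have ex2 : (b-a)^(p+1+q+1) = X * (b-a) := by
        rw [hX, ← Real.rpow_add_one hba.ne']
        ring_nf
      rw [ex1, ex2, hC, beta_symm (q+2) (p+1), beta_symm (q+1) (p+2)]
      field_simp
      ring
    exact le_of_le_of_eq hmono hcomp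
  -- step 0
  have hstep0 : ∫ x in a..b, w x * f x ≤ ∫ x in a..b, w x * |f x| :=
    intervalIntegral.integral_mono_on hab.le hiwf hiwa
      (fun x hx => mul_le_mul_of_nonneg_left (le_abs_self _) (hwnn x hx))
  have hgoal : (∫ x in a..b, (x-a)^p * (b-x)^q * f x) = ∫ x in a..b, w x * f x := rfl
  rw [hgoal]
  rcases hl.lt_or_eq with hl1 | hl1
  · -- Hölder case, 1 < l
    have hlm := Real.HolderConjugate.conjExponent hl1
    set m := Real.conjExponent l with hmdef
    have hml : m.HolderConjugate l := hlm.symm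
    have hm1 : 1/m = (l-1)/l := by
      rw [hmdef, Real.conjExponent, one_div_div]
    have hsum : (l-1)/l + 1/l = 1 := by field_simp; ring
    set F : ℝ → ℝ := fun x => w x ^ ((l-1)/l) with hF
    set G : ℝ → ℝ := fun x => w x ^ (1/l) * |f x| with hG
    set μ := volume.restrict (Set.Ioc a b) with hμ
    haveI : IsFiniteMeasure μ := by
      constructor
      rw [hμ, Measure.restrict_apply_univ, Real.volume_Ioc]
      exact ENNReal.ofReal_lt_top
    have hFcont : Continuous F :=
      (cont_rpow (div_pos (by linarith) hl0)).comp hwcont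
    have hGcont : ContinuousOn G (Set.Icc a b) :=
      ((cont_rpow (by positivity)).comp hwcont).continuousOn.mul hcont.abs
    obtain ⟨CF, hCF⟩ := isCompact_Icc.exists_bound_of_continuousOn hFcont.continuousOn
    have hFmem : MemLp F (ENNReal.ofReal m) μ :=
      MemLp.of_bound hFcont.aestronglyMeasurable.restrict CF
        ((ae_restrict_iff' measurableSet_Ioc).2
          (ae_of_all _ fun x hx => hCF x (Set.Ioc_subset_Icc_self hx)))
    obtain ⟨CG, hCG⟩ := isCompact_Icc.exists_bound_of_continuousOn hGcont
    have hGmem : MemLp G (ENNReal.ofReal l) μ :=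
      MemLp.of_bound
        ((hGcont.mono Set.Ioc_subset_Icc_self).aestronglyMeasurable measurableSet_Ioc) CG
        ((ae_restrict_iff' measurableSet_Ioc).2
          (ae_of_all _ fun x hx => hCG x (Set.Ioc_subset_Icc_self hx)))
    have hFnn : 0 ≤ᵐ[μ] F := (ae_restrict_iff' measurableSet_Ioc).2 (ae_of_all _ fun x hx =>
      Real.rpow_nonneg (hwnn x (Set.Ioc_subset_Icc_self hx)) _)
    have hGnn : 0 ≤ᵐ[μ] G := (ae_restrict_iff' measurableSet_Ioc).2 (ae_of_all _ fun x hx =>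
      mul_nonneg (Real.rpow_nonneg (hwnn x (Set.Ioc_subset_Icc_self hx)) _) (abs_nonneg _))
    have hHold := MeasureTheory.integral_mul_le_Lp_mul_Lq_of_nonneg hml hFnn hGnn hFmem hGmem
    have e1 : ∫ x, F x * G x ∂μ = ∫ x in a..b, w x * |f x| := by
      rw [intervalIntegral.integral_of_le hab.le]
      apply setIntegral_congr_fun measurableSet_Ioc
      intro x hx
      have hw0 := hwnn x (Set.Ioc_subset_Icc_self hx)
      simp only [hF, hG]
      rw [← mul_assoc, ← Real.rpow_add' hw0 (by rw [hsum]; norm_num), hsum, Real.rpow_one]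
    have e2 : ∫ x, F x ^ m ∂μ = ∫ x in a..b, w x := by
      rw [intervalIntegral.integral_of_le hab.le]
      apply setIntegral_congr_fun measurableSet_Ioc
      intro x hx
      have hw0 := hwnn x (Set.Ioc_subset_Icc_self hx)
      have hem : (l-1)/l * m = 1 := by
        have h1 : l - 1 ≠ 0 := by linarith
        rw [hmdef, Real.conjExponent]
        field_simp
      simp only [hF]
      rw [← Real.rpow_mul hw0, hem, Real.rpow_one]
    have e3 : ∫ x, G x ^ l ∂μ = ∫ x in a..b, w x * g x := by
      rw [intervalIntegral.integral_of_le hab.le]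
      apply setIntegral_congr_fun measurableSet_Ioc
      intro x hx
      have hw0 := hwnn x (Set.Ioc_subset_Icc_self hx)
      simp only [hF, hG, g]
      rw [Real.mul_rpow (Real.rpow_nonneg hw0 _) (abs_nonneg _), ← Real.rpow_mul hw0,
        one_div_mul_cancel hl0.ne', Real.rpow_one]
    have hβnn := beta_nonneg (p+1) (q+1)
    have hwgnn : 0 ≤ ∫ x in a..b, w x * g x := intervalIntegral.integral_nonneg hab.le
      (fun x hx => mul_nonneg (hwnn x hx) (Real.rpow_nonneg (abs_nonneg _) _))
    calc ∫ x in a..b, w x * f x ≤ ∫ x in a..b, w x * |f x| := hstep0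
      _ = ∫ x, F x * G x ∂μ := e1.symm
      _ ≤ (∫ x, F x ^ m ∂μ)^(1/m) * (∫ x, G x ^ l ∂μ)^(1/l) := hHold
      _ = (X * beta (p+1) (q+1))^((l-1)/l) * (∫ x in a..b, w x * g x)^(1/l) := by
          rw [e2, e3, weight_int hab hp hq, hm1]
      _ ≤ (X * beta (p+1) (q+1))^((l-1)/l) * (X * C)^(1/l) := by
          apply mul_le_mul_of_nonneg_left _ (Real.rpow_nonneg (mul_nonneg hX0.le hβnn) _)
          exact Real.rpow_le_rpow hwgnn hK (by positivity)
      _ = X * (beta (p+1) (q+1))^((l-1)/l) * C^(1/l) := by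
          rw [Real.mul_rpow hX0.le hβnn, Real.mul_rpow hX0.le hC0]
          have hXX : X^((l-1)/l) * X^(1/l) = X := by
            rw [← Real.rpow_add' hX0.le (by rw [hsum]; norm_num), hsum, Real.rpow_one]
          linear_combination (beta (p+1) (q+1) ^ ((l-1)/l) * C ^ (1/l)) * hXX
  · -- l = 1
    subst hl1
    have h1 : (fun x : ℝ => w x * |f x|) = fun x => w x * g x := by
      funext x
      rw [hg]
      norm_num
    calc ∫ x in a..b, w x * f x ≤ ∫ x in a..b, w x * |f x| := hstep0
      _ ≤ X * C := by rw [h1] at *; exact hK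
      _ = X * (beta (p+1) (q+1))^((1-1)/(1:ℝ)) * C ^ (1/(1:ℝ)) := by
          norm_num
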